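/- arXiv:2308.10455 — 2 statements merged into one kernel-verified Lean document; each statement's English description precedes it below -/
import Mathlib

section
/- For a linear map T from the real polynomial ring ℝ[x₁,…,xₙ] to itself, there exist unique polynomials q_α ∈ ℝ[x₁,…,xₙ] for each multi-index α ∈ ℕ₀ⁿ such that T = ∑_α q_α · ∂^α, where ∂^α denotes the partial differential operator of multi-degree α. -/
open MvPolynomial

/-- The constant-coefficient differential operator `∂^α = ∂₁^{α₁} ⋯ ∂ₙ^{αₙ}`
on the polynomial ring `ℝ[x₁,…,xₙ]`. -/
noncomputable def partialPow (n : ℕ) (α : Fin n →₀ ℕ) :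
    Module.End ℝ (MvPolynomial (Fin n) ℝ) :=
  (List.ofFn fun i : Fin n => ((MvPolynomial.pderiv (R := ℝ) i).toLinearMap) ^ (α i)).prod

lemma pderiv_pow_monomial (n : ℕ) (i : Fin n) (k : ℕ) (γ : Fin n →₀ ℕ) (c : ℝ) :
    (((pderiv (R := ℝ) i).toLinearMap) ^ k) (monomial γ c)
      = monomial (γ - Finsupp.single i k) (c * ((γ i).descFactorial k)) := by
  induction k generalizing γ c with
  | zero => simp
  | succ k ih =>
      rw [pow_succ, Module.End.mul_apply]
      rw [show ((pderiv (R := ℝ) i).toLinearMap) (monomial γ c)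
            = (pderiv (R := ℝ) i) (monomial γ c) from rfl,
        pderiv_monomial, ih]
      congr 1
      · rw [tsub_tsub, ← Finsupp.single_add, add_comm]
      · rw [Finsupp.tsub_apply, Finsupp.single_apply, if_pos rfl]
        rcases Nat.eq_zero_or_eq_succ_pred (γ i) with h | h
        · simp [h]
        · rw [h, Nat.succ_sub_one, Nat.succ_descFactorial_succ]
          push_cast; ring

lemma sum_single_apply_eq_zero (n : ℕ) (α : Fin n →₀ ℕ) (l : List (Fin n)) (i : Fin n)
    (hi : i ∉ l) : ((l.map fun j => Finsupp.single j (α j)).sum) i = 0 := by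
  induction l with
  | nil => simp
  | cons j l ihl =>
      simp only [List.mem_cons, not_or] at hi
      simp only [List.map_cons, List.sum_cons, Finsupp.add_apply]
      rw [Finsupp.single_apply, if_neg (fun h => hi.1 h.symm), ihl hi.2]

lemma list_prod_apply_monomial (n : ℕ) (α : Fin n →₀ ℕ) (l : List (Fin n)) (hl : l.Nodup)
    (γ : Fin n →₀ ℕ) (c : ℝ) :
    ((l.map fun i => ((pderiv (R := ℝ) i).toLinearMap) ^ (α i)).prod) (monomial γ c)
      = monomial (γ - (l.map fun i => Finsupp.single i (α i)).sum)
          (c * ((l.map fun i => (((γ i).descFactorial (α i) : ℝ))).prod)) := by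
  induction l generalizing γ c with
  | nil => simp
  | cons i l ih =>
      have hi : i ∉ l := (List.nodup_cons.mp hl).1
      have hl' : l.Nodup := (List.nodup_cons.mp hl).2
      simp only [List.map_cons, List.prod_cons, Module.End.mul_apply, List.sum_cons]
      rw [ih hl', pderiv_pow_monomial]
      congr 1
      · rw [tsub_tsub, add_comm]
      · rw [Finsupp.tsub_apply, sum_single_apply_eq_zero n α l i hi, Nat.sub_zero]
        ring

lemma partialPow_monomial (n : ℕ) (α γ : Fin n →₀ ℕ) (c : ℝ) :
    partialPow n α (monomial γ c)
      = monomial (γ - α) (c * ∏ i, ((γ i).descFactorial (α i) : ℝ)) := by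
  rw [partialPow, List.ofFn_eq_map,
    list_prod_apply_monomial n α _ (List.nodup_finRange n)]
  have hsum : (∑ i : Fin n, Finsupp.single i (α i)) = α := by
    ext j
    rw [Finset.sum_apply']
    simp [Finsupp.single_apply, Finset.sum_ite_eq' Finset.univ j]
  rw [← List.ofFn_eq_map, List.sum_ofFn, hsum, ← List.ofFn_eq_map, List.prod_ofFn]

lemma partialPow_monomial_of_not_le (n : ℕ) {α γ : Fin n →₀ ℕ} (c : ℝ) (h : ¬ α ≤ γ) :
    partialPow n α (monomial γ c) = 0 := by
  rw [partialPow_monomial]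
  have : ∃ i, γ i < α i := by
    by_contra hc
    push_neg at hc
    exact h fun i => hc i
  obtain ⟨i, hi⟩ := this
  rw [Finset.prod_eq_zero (Finset.mem_univ i) (by
    rw [Nat.cast_eq_zero, Nat.descFactorial_eq_zero_iff_lt]; exact hi)]
  simp

lemma partialPow_monomial_self (n : ℕ) (γ : Fin n →₀ ℕ) (c : ℝ) :
    partialPow n γ (monomial γ c) = C (c * ∏ i, (Nat.factorial (γ i) : ℝ)) := by
  rw [partialPow_monomial, tsub_self, MvPolynomial.C_apply]
  simp only [Nat.descFactorial_self]

lemma factorial_prod_ne_zero (n : ℕ) (γ : Fin n →₀ ℕ) :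
    (∏ i, (Nat.factorial (γ i) : ℝ)) ≠ 0 :=
  Finset.prod_ne_zero_iff.mpr fun i _ => Nat.cast_ne_zero.mpr (Nat.factorial_ne_zero _)

lemma partialPow_eq_zero_of_not_le_support (n : ℕ) (p : MvPolynomial (Fin n) ℝ)
    (α : Fin n →₀ ℕ) (h : ∀ s ∈ p.support, ¬ α ≤ s) : partialPow n α p = 0 := by
  conv_lhs => rw [p.as_sum]
  rw [map_sum]
  refine Finset.sum_eq_zero fun s hs => ?_
  exact partialPow_monomial_of_not_le n _ (h s hs)

lemma support_subset_bound (n : ℕ) (q : (Fin n →₀ ℕ) → MvPolynomial (Fin n) ℝ)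
    (p : MvPolynomial (Fin n) ℝ) :
    (Function.support fun α => q α * partialPow n α p)
      ⊆ ↑(p.support.biUnion Finset.Iic) := by
  intro α hα
  simp only [Function.mem_support] at hα
  by_contra hc
  simp only [Finset.coe_biUnion, Set.mem_iUnion, Finset.mem_coe, Finset.mem_Iic] at hc
  push_neg at hc
  rw [partialPow_eq_zero_of_not_le_support n p α hc, mul_zero] at hα
  exact hα rfl

lemma finite_support (n : ℕ) (q : (Fin n →₀ ℕ) → MvPolynomial (Fin n) ℝ)
    (p : MvPolynomial (Fin n) ℝ) :
    (Function.support fun α => q α * partialPow n α p).Finite :=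
  Set.Finite.subset (Finset.finite_toSet _) (support_subset_bound n q p)

lemma finsum_monomial_eq (n : ℕ) (q : (Fin n →₀ ℕ) → MvPolynomial (Fin n) ℝ)
    (γ : Fin n →₀ ℕ) (c : ℝ) :
    (∑ᶠ α, q α * partialPow n α (monomial γ c))
      = ∑ β ∈ Finset.Iic γ, q β * partialPow n β (monomial γ c) := by
  refine finsum_eq_sum_of_support_subset _ fun α hα => ?_
  simp only [Function.mem_support] at hα
  rw [Finset.coe_Iic, Set.mem_Iic]
  by_contra hc
  rw [partialPow_monomial_of_not_le n c hc, mul_zero] at hα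
  exact hα rfl

lemma deg_lt_of_mem_Iio {n : ℕ} {β α : Fin n →₀ ℕ} (h : β ∈ Finset.Iio α) :
    ∑ i, β i < ∑ i, α i := by
  rw [Finset.mem_Iio] at h
  have hle : ∀ i, β i ≤ α i := fun i => h.le i
  have : ∃ i, β i < α i := by
    by_contra hc
    push_neg at hc
    exact absurd (le_antisymm h.le fun i => hc i) h.ne
  obtain ⟨i, hi⟩ := this
  exact Finset.sum_lt_sum (fun i _ => hle i) ⟨i, Finset.mem_univ i, hi⟩

noncomputable def qfun (n : ℕ) (T : Module.End ℝ (MvPolynomial (Fin n) ℝ)) :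
    (Fin n →₀ ℕ) → MvPolynomial (Fin n) ℝ
  | α => ((∏ i, (Nat.factorial (α i) : ℝ)))⁻¹ •
      (T (monomial α 1) -
        ∑ β ∈ (Finset.Iio α).attach, qfun n T β.1 * partialPow n β.1 (monomial α 1))
termination_by α => ∑ i, α i
decreasing_by exact deg_lt_of_mem_Iio β.2

lemma qfun_key (n : ℕ) (T : Module.End ℝ (MvPolynomial (Fin n) ℝ)) (α : Fin n →₀ ℕ) :
    ∑ β ∈ Finset.Iic α, qfun n T β * partialPow n β (monomial α 1)
      = T (monomial α 1) := by
  have hne := factorial_prod_ne_zero n α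
  rw [← Finset.Iio_insert, Finset.sum_insert (by simp)]
  rw [partialPow_monomial_self, one_mul]
  conv_lhs => rw [qfun]
  rw [Finset.sum_attach (Finset.Iio α)
      (fun β => qfun n T β * partialPow n β (monomial α 1))]
  rw [mul_comm, ← MvPolynomial.smul_eq_C_mul, smul_smul, mul_inv_cancel₀ hne, one_smul]
  ring

theorem stmt0_exists (n : ℕ) (T : Module.End ℝ (MvPolynomial (Fin n) ℝ)) :
    ∀ p : MvPolynomial (Fin n) ℝ,
      T p = ∑ᶠ α : Fin n →₀ ℕ, qfun n T α * (partialPow n α p) := by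
  intro p
  induction p using MvPolynomial.induction_on' with
  | monomial s a =>
      rw [finsum_monomial_eq]
      have : (monomial s a : MvPolynomial (Fin n) ℝ) = a • monomial s 1 := by
        rw [smul_monomial, smul_eq_mul, mul_one]
      rw [this, map_smul, ← qfun_key n T s, Finset.smul_sum]
      refine Finset.sum_congr rfl fun β _ => ?_
      rw [map_smul, mul_smul_comm]
  | add p p' ihp ihp' =>
      rw [map_add, ihp, ihp']
      rw [← finsum_add_distrib (finite_support n _ p) (finite_support n _ p')]
      congr 1
      funext α
      rw [map_add, mul_add]

/-- Every linear map `T : ℝ[x₁,…,xₙ] → ℝ[x₁,…,xₙ]` has a unique representation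
`T = ∑_α q_α ∂^α` with polynomial coefficients `q_α`. -/
theorem stmt0 (n : ℕ) (T : Module.End ℝ (MvPolynomial (Fin n) ℝ)) :
    ∃! q : (Fin n →₀ ℕ) → MvPolynomial (Fin n) ℝ,
      ∀ p : MvPolynomial (Fin n) ℝ,
        T p = ∑ᶠ α : Fin n →₀ ℕ, q α * (partialPow n α p) := by
  refine ⟨qfun n T, stmt0_exists n T, ?_⟩
  intro q hq
  funext γ
  -- strong induction on degree
  suffices H : ∀ d : ℕ, ∀ γ : Fin n →₀ ℕ, (∑ i, γ i) = d → q γ = qfun n T γ from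
    H (∑ i, γ i) γ rfl
  intro d
  induction d using Nat.strong_induction_on with
  | _ d ih =>
      intro γ hγ
      have h1 : ∑ β ∈ Finset.Iic γ, q β * partialPow n β (monomial γ 1)
          = T (monomial γ 1) := by
        rw [hq (monomial γ 1), finsum_monomial_eq]
      have h2 := qfun_key n T γ
      rw [← Finset.Iio_insert, Finset.sum_insert (by simp)] at h1 h2
      have hsum : ∑ β ∈ Finset.Iio γ, q β * partialPow n β (monomial γ 1)
          = ∑ β ∈ Finset.Iio γ, qfun n T β * partialPow n β (monomial γ 1) := by
        refine Finset.sum_congr rfl fun β hβ => ?_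
        rw [ih (∑ i, β i) (hγ ▸ deg_lt_of_mem_Iio hβ) β rfl]
      rw [hsum] at h1
      have hcancel : q γ * partialPow n γ (monomial γ 1)
          = qfun n T γ * partialPow n γ (monomial γ 1) := by
        have := h1.trans h2.symm
        exact add_right_cancel this
      rw [partialPow_monomial_self, one_mul] at hcancel
      have hCne : (C (∏ i, (Nat.factorial (γ i) : ℝ)) : MvPolynomial (Fin n) ℝ) ≠ 0 := by
        rw [Ne, MvPolynomial.C_eq_zero]
        exact factorial_prod_ne_zero n γ
      exact mul_right_cancel₀ hCne hcancel
end

section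
/- Let k ≥ 3 and a ∈ ℝ \ {0}. The operator exp(a∂_x^k) = ∑_{j≥0} (a^j/j!)·∂_x^{jk} on ℝ[x] is not a positivity preserver: there exists a polynomial p ≥ 0 on ℝ such that exp(a∂_x^k)p takes a negative value. -/
/-- The operator `exp(a ∂_x^k) = ∑_{j≥0} (a^j/j!) ∂_x^{jk}` applied to a polynomial
(only finitely many terms are nonzero). -/
noncomputable def expDk (a : ℝ) (k : ℕ) (p : Polynomial ℝ) : Polynomial ℝ :=
  ∑ᶠ j : ℕ, (a ^ j / (j.factorial : ℝ)) •
    (((Polynomial.derivative : Module.End ℝ (Polynomial ℝ))) ^ (j * k)) p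

open Polynomial

/-- For `k ≥ 3` and `a ≠ 0`, the operator `exp(a ∂_x^k)` is not a positivity preserver:
some polynomial nonnegative on `ℝ` is mapped to a polynomial taking a negative value. -/
theorem stmt11 (k : ℕ) (hk : 3 ≤ k) (a : ℝ) (ha : a ≠ 0) :
    ∃ p : Polynomial ℝ, (∀ x : ℝ, 0 ≤ p.eval x) ∧
      ∃ x : ℝ, (expDk a k p).eval x < 0 := by
  obtain ⟨m, rfl⟩ : ∃ m, k = m + 3 := ⟨k - 3, by omega⟩
  set k := m + 3 with hkdef
  set p : Polynomial ℝ := (X - C a * X ^ (m + 2)) ^ 2 with hp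
  have hpexp : p = X ^ 2 - C (2 * a) * X ^ (m + 3) + C (a ^ 2) * X ^ (2 * m + 4) := by
    rw [hp]
    simp only [map_mul, map_pow, map_ofNat]
    ring
  have hdeg : p.natDegree < 2 * k := by
    have h1 : (X - C a * X ^ (m + 2) : Polynomial ℝ).natDegree ≤ m + 2 := by
      refine (natDegree_sub_le _ _).trans (max_le ?_ ?_)
      · simp only [natDegree_X]; omega
      · exact (natDegree_C_mul_le _ _).trans (by simp)
    calc p.natDegree ≤ 2 * (m + 2) := by
          rw [hp]
          exact (natDegree_pow_le).trans (by omega)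
      _ < 2 * k := by omega
  refine ⟨p, ?_, 0, ?_⟩
  · intro x
    rw [hp, eval_pow]
    exact sq_nonneg _
  · have hsupp : Function.support (fun j : ℕ => (a ^ j / (j.factorial : ℝ)) •
        (((Polynomial.derivative : Module.End ℝ (Polynomial ℝ))) ^ (j * k)) p)
        ⊆ (({0, 1} : Finset ℕ) : Set ℕ) := by
      intro j hj
      simp only [Function.mem_support] at hj
      by_contra hjmem
      simp only [Finset.coe_insert, Finset.coe_singleton, Set.mem_insert_iff,
        Set.mem_singleton_iff] at hjmem
      push_neg at hjmem
      have h2 : 2 ≤ j := by omega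
      apply hj
      have hz : (((Polynomial.derivative : Module.End ℝ (Polynomial ℝ))) ^ (j * k)) p = 0 := by
        rw [Module.End.pow_apply]
        apply Polynomial.iterate_derivative_eq_zero
        calc p.natDegree < 2 * k := hdeg
          _ ≤ j * k := Nat.mul_le_mul_right k h2
      rw [hz, smul_zero]
    rw [expDk, finsum_eq_sum_of_support_subset _ hsupp]
    rw [Finset.sum_insert (by simp), Finset.sum_singleton]
    simp only [pow_zero, Nat.factorial_zero, Nat.cast_one, div_one, pow_one, Nat.factorial_one,
      Nat.zero_mul, Nat.one_mul, one_smul, Module.End.pow_apply, Function.iterate_zero_apply, Module.End.one_apply]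
    have hcoeffk : p.coeff k = -(2 * a) := by
      rw [hpexp]
      simp only [coeff_add, coeff_sub, coeff_C_mul, coeff_X_pow]
      have h1 : ¬ (k = 2) := by omega
      have h3 : ¬ (2 * m + 4 = k) := by omega
      simp only [if_pos trivial, if_pos hkdef, if_neg h1, if_neg (show ¬ k = 2*m+4 by omega)]
      ring
    have hev1 : eval 0 ((⇑(derivative : Module.End ℝ (Polynomial ℝ)))^[k] p)
        = (k.factorial : ℝ) * (-(2 * a)) := by
      rw [← Polynomial.coeff_zero_eq_eval_zero, Polynomial.coeff_iterate_derivative]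
      rw [Nat.zero_add, hcoeffk, Nat.descFactorial_self, nsmul_eq_mul]
    have hev0 : eval 0 p = 0 := by
      rw [hp]
      simp [zero_pow (by omega : m + 2 ≠ 0)]
    rw [eval_add, eval_smul, hev0, hev1, smul_eq_mul]
    have hf : (0:ℝ) < k.factorial := by exact_mod_cast k.factorial_pos
    have ha2 : (0:ℝ) < a ^ 2 := by positivity
    nlinarith [mul_pos hf ha2]
end
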